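/- For n ≥ 3 and every integer k ≥ 1, each of the three model classes 2H, kH − (k−1)E_1, and kH − (k−1)E_1 − E_2 in ℤ^{1,n} can be written as a finite linear combination with nonnegative integer coefficients of exceptional classes in ℰ_K. (Step in the proof of Theorem 2.5: each model class of a positive-square sphere class is a combination of exceptional classes.) -/

import Mathlib

open Finset

noncomputable section

/-- The intersection pairing on ℝ^{1,n}: coordinate `0` is the coefficient of `H`,
coordinate `i.succ` is the coefficient of `E_{i+1}`.  `H·H = 1`, `E_i·E_i = -1`,
distinct basis vectors are orthogonal. -/
def ip (n : ℕ) (x y : Fin (n + 1) → ℝ) : ℝ :=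
  x 0 * y 0 - ∑ i : Fin n, x i.succ * y i.succ

/-- The canonical class `K = -3H + E_1 + ⋯ + E_n`. -/
def Kc (n : ℕ) : Fin (n + 1) → ℝ := fun j => if (j : ℕ) = 0 then -3 else 1

/-- The reflection `x ↦ x + (x·l)l` along `l`. -/
def reflAlong (n : ℕ) (l : Fin (n + 1) → ℝ) : Function.End (Fin (n + 1) → ℝ) :=
  fun x => x + ip n x l • l

/-- The simple roots: `l_0 = H - E_1 - E_2 - E_3` and `l_i = E_i - E_{i+1}`
for `1 ≤ i ≤ n - 1`. -/
def root (n : ℕ) (i : Fin n) : Fin (n + 1) → ℝ :=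
  if (i : ℕ) = 0 then
    fun j => if (j : ℕ) = 0 then 1 else if (j : ℕ) ≤ 3 then -1 else 0
  else
    fun j => if (j : ℕ) = (i : ℕ) then 1 else if (j : ℕ) = (i : ℕ) + 1 then -1 else 0

/-- The Weyl group `W_n`, generated by the simple reflections `s_{l_0}, …, s_{l_{n-1}}`.
(The generators are involutions, so the submonoid they generate coincides with the
subgroup they generate.) -/
def Wgroup (n : ℕ) : Submonoid (Function.End (Fin (n + 1) → ℝ)) :=
  Submonoid.closure (Set.range fun i : Fin n => reflAlong n (root n i))

/-- The class `E_n`. -/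
def En (n : ℕ) : Fin (n + 1) → ℝ := fun j => if (j : ℕ) = n then 1 else 0

/-- The set `ℰ_K` of exceptional classes: the `W_n`-orbit of `E_n`. -/
def EK (n : ℕ) : Set (Fin (n + 1) → ℝ) := {e | ∃ w ∈ Wgroup n, e = w (En n)}

/-- `v` is a finite linear combination with nonnegative integer coefficients of
exceptional classes in `ℰ_K`. -/
def IsNNIntCombOfExceptional (n : ℕ) (v : Fin (n + 1) → ℝ) : Prop :=
  ∃ (S : Finset (Fin (n + 1) → ℝ)) (c : (Fin (n + 1) → ℝ) → ℕ),
    ↑S ⊆ EK n ∧ v = ∑ E ∈ S, (c E : ℝ) • E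

/-- The model class `2H`. -/
def twoH (n : ℕ) : Fin (n + 1) → ℝ := fun j => if (j : ℕ) = 0 then 2 else 0

/-- The model class `kH - (k-1)E_1`. -/
def modelA (n k : ℕ) : Fin (n + 1) → ℝ := fun j =>
  if (j : ℕ) = 0 then (k : ℝ) else if (j : ℕ) = 1 then -((k : ℝ) - 1) else 0

/-- The model class `kH - (k-1)E_1 - E_2`. -/
def modelB (n k : ℕ) : Fin (n + 1) → ℝ := fun j =>
  if (j : ℕ) = 0 then (k : ℝ)
  else if (j : ℕ) = 1 then -((k : ℝ) - 1)
  else if (j : ℕ) = 2 then -1 else 0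

def ev (n m : ℕ) : Fin (n + 1) → ℝ := fun j => if (j : ℕ) = m then 1 else 0

def hcl (n : ℕ) : Fin (n + 1) → ℝ := fun j =>
  if (j : ℕ) = 0 then 1 else if (j : ℕ) ≤ 2 then -1 else 0

lemma ip_ev (n m : ℕ) (h1 : 1 ≤ m) (h2 : m ≤ n) (y : Fin (n + 1) → ℝ) :
    ip n (ev n m) y = - y ⟨m, by omega⟩ := by
  have hm' : m - 1 < n := by omega
  unfold ip ev
  rw [Finset.sum_eq_single (⟨m - 1, hm'⟩ : Fin n)]
  · have : ((⟨m - 1, hm'⟩ : Fin n).succ : Fin (n+1)) = ⟨m, by omega⟩ := by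
      ext; simp [Fin.val_succ]; omega
    rw [this]
    simp
    left; split_ifs with h
    · exfalso; revert h; simp; omega
    · exact if_neg h
  · intro b _ hb
    have : ((b : ℕ) + 1) ≠ m := by
      intro h
      apply hb
      ext
      simp; omega
    simp [Fin.val_succ, this]
  · simp

lemma refl_swap (n m : ℕ) (h1 : 1 ≤ m) (h2 : m < n) :
    reflAlong n (root n ⟨m, h2⟩) (ev n (m + 1)) = ev n m := by
  have hroot : root n ⟨m, h2⟩ = fun j : Fin (n+1) =>
      if (j : ℕ) = m then 1 else if (j : ℕ) = m + 1 then -1 else 0 := by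
    unfold root
    simp [show m ≠ 0 by omega]
  have hip : ip n (ev n (m + 1)) (root n ⟨m, h2⟩) = 1 := by
    rw [ip_ev n (m + 1) (by omega) (by omega), hroot]
    norm_num
  unfold reflAlong
  rw [hip, hroot]
  funext j
  simp only [Pi.add_apply, Pi.smul_apply, one_smul, ev]
  by_cases ha : (j : ℕ) = m <;> by_cases hb : (j : ℕ) = m + 1 <;> simp [ha, hb] <;> omega

lemma refl_hcl (n : ℕ) (hn : 3 ≤ n) :
    reflAlong n (root n ⟨0, by omega⟩) (ev n 3) = hcl n := by
  have hroot : root n ⟨0, by omega⟩ = fun j : Fin (n+1) =>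
      if (j : ℕ) = 0 then 1 else if (j : ℕ) ≤ 3 then -1 else 0 := by
    unfold root; simp
  have hip : ip n (ev n 3) (root n ⟨0, by omega⟩) = 1 := by
    rw [ip_ev n 3 (by omega) (by omega), hroot]
    norm_num
  unfold reflAlong
  rw [hip, hroot]
  funext j
  simp only [Pi.add_apply, Pi.smul_apply, one_smul, ev, hcl]
  rcases Nat.lt_or_ge (j : ℕ) 4 with h | h
  · interval_cases h' : (j : ℕ) <;> norm_num
  · have h0 : (j : ℕ) ≠ 0 := by omega
    have h3 : (j : ℕ) ≠ 3 := by omega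
    have h4 : ¬ (j : ℕ) ≤ 3 := by omega
    have h5 : ¬ (j : ℕ) ≤ 2 := by omega
    simp [h0, h3, h4, h5]

lemma EK_refl (n : ℕ) (i : Fin n) {e : Fin (n+1) → ℝ} (he : e ∈ EK n) :
    reflAlong n (root n i) e ∈ EK n := by
  obtain ⟨w, hw, rfl⟩ := he
  exact ⟨reflAlong n (root n i) * w,
    mul_mem (Submonoid.subset_closure ⟨i, rfl⟩) hw, rfl⟩

lemma En_mem (n : ℕ) : En n ∈ EK n := ⟨1, one_mem _, rfl⟩

lemma ev_mem (n m : ℕ) (h1 : 1 ≤ m) (h2 : m ≤ n) : ev n m ∈ EK n := by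
  obtain ⟨d, rfl⟩ : ∃ d, m = n - d := ⟨n - m, by omega⟩
  induction d with
  | zero =>
    have : ev n (n - 0) = En n := by
      funext j; simp [ev, En]
    rw [this]; exact En_mem n
  | succ d ih =>
    by_cases hd : n - (d + 1) = n - d
    · rw [hd]; exact ih (by omega) (by omega)
    · have hm : 1 ≤ n - (d+1) := h1
      have hlt : n - (d+1) < n := by omega
      have := refl_swap n (n - (d+1)) hm hlt
      have hstep : n - (d+1) + 1 = n - d := by omega
      rw [hstep] at this
      rw [← this]
      exact EK_refl n _ (ih (by omega) (by omega))

lemma hcl_mem (n : ℕ) (hn : 3 ≤ n) : hcl n ∈ EK n := by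
  rw [← refl_hcl n hn]
  exact EK_refl n _ (ev_mem n 3 (by omega) hn)

lemma comb (n : ℕ) (hn : 3 ≤ n) (a1 a2 a3 : ℕ) (v : Fin (n+1) → ℝ)
    (hv : v = (a1 : ℝ) • ev n 1 + (a2 : ℝ) • ev n 2 + (a3 : ℝ) • hcl n) :
    IsNNIntCombOfExceptional n v := by
  have h12 : ev n 1 ≠ ev n 2 := by
    intro h
    have := congrFun h ⟨1, by omega⟩
    simp [ev] at this
  have h1h : ev n 1 ≠ hcl n := by
    intro h
    have := congrFun h ⟨0, by omega⟩
    simp [ev, hcl] at this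
  have h2h : ev n 2 ≠ hcl n := by
    intro h
    have := congrFun h ⟨0, by omega⟩
    simp [ev, hcl] at this
  refine ⟨{ev n 1, ev n 2, hcl n},
    fun w => if w = ev n 1 then a1 else if w = ev n 2 then a2 else a3, ?_, ?_⟩
  · intro x hx
    simp only [Finset.coe_insert, Finset.coe_singleton, Set.mem_insert_iff,
      Set.mem_singleton_iff] at hx
    rcases hx with rfl | rfl | rfl
    · exact ev_mem n 1 (by omega) (by omega)
    · exact ev_mem n 2 (by omega) (by omega)
    · exact hcl_mem n hn
  · rw [Finset.sum_insert (by simp [h12, h1h]),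
      Finset.sum_insert (by simp [h2h]), Finset.sum_singleton]
    simp only [if_pos rfl, if_neg h12.symm, if_neg h1h.symm, if_neg h2h.symm, hv]
    simp only [↓reduceIte, h12]
    abel


/-- Each of the model classes `2H`, `kH - (k-1)E_1`, and `kH - (k-1)E_1 - E_2`
is a finite nonnegative-integer combination of exceptional classes. -/
theorem model_classes_are_combinations_of_exceptional
    (n k : ℕ) (hn : 3 ≤ n) (hk : 1 ≤ k) :
    IsNNIntCombOfExceptional n (twoH n) ∧
    IsNNIntCombOfExceptional n (modelA n k) ∧
    IsNNIntCombOfExceptional n (modelB n k) := by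
  refine ⟨comb n hn 2 2 2 _ ?_, comb n hn 1 k k _ ?_, comb n hn 1 (k-1) k _ ?_⟩
  · funext j
    simp only [twoH, ev, hcl, Pi.add_apply, Pi.smul_apply, smul_eq_mul]
    by_cases h0 : (j : ℕ) = 0 <;> by_cases h1 : (j : ℕ) = 1 <;>
      by_cases h2 : (j : ℕ) = 2 <;>
      simp [h0, h1, h2, show ((j:ℕ) ≤ 2) ↔ ((j:ℕ)=0 ∨ (j:ℕ)=1 ∨ (j:ℕ)=2) from by omega] <;> ring
  · funext j
    simp only [modelA, ev, hcl, Pi.add_apply, Pi.smul_apply, smul_eq_mul]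
    by_cases h0 : (j : ℕ) = 0 <;> by_cases h1 : (j : ℕ) = 1 <;>
      by_cases h2 : (j : ℕ) = 2 <;>
      simp [h0, h1, h2, show ((j:ℕ) ≤ 2) ↔ ((j:ℕ)=0 ∨ (j:ℕ)=1 ∨ (j:ℕ)=2) from by omega] <;> ring
  · funext j
    have hc : ((k - 1 : ℕ) : ℝ) = (k : ℝ) - 1 := by
      push_cast [hk]; ring
    simp only [modelB, ev, hcl, Pi.add_apply, Pi.smul_apply, smul_eq_mul, hc]
    by_cases h0 : (j : ℕ) = 0 <;> by_cases h1 : (j : ℕ) = 1 <;>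
      by_cases h2 : (j : ℕ) = 2 <;>
      simp [h0, h1, h2, show ((j:ℕ) ≤ 2) ↔ ((j:ℕ)=0 ∨ (j:ℕ)=1 ∨ (j:ℕ)=2) from by omega] <;> ring
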